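/- Let C be a linear [n,k] code over F_q with availability t (each coordinate covered by t orthogonal dual parities of weight ≤ r+1), with r ≥ 2 and t ≥ 2. Then d_min(C) ≤ d_max(n − ir − 1, k − (i(r−1)+1), r, t) for every positive integer i with i(r−1)+1 < k, where d_max(n',k',r,t) is the maximum minimum distance of an availability-t, locality-r code with length n' and dimension k' over F_q. -/

import Mathlib

open Finset

/-- The Hamming weight of a vector. -/
def wt {F : Type} [Zero F] [DecidableEq F] {ι : Type} [Fintype ι] (v : ι → F) : ℕ :=
  (univ.filter (fun j => v j ≠ 0)).card

/-- The standard dot product with `c`, as a linear map. -/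
noncomputable def dotL {F : Type} [Field F] {ι : Type} [Fintype ι] (c : ι → F) :
    (ι → F) →ₗ[F] F :=
  ∑ j, c j • (LinearMap.proj j : (ι → F) →ₗ[F] F)

/-- The dual code of a linear code `C`: all vectors orthogonal (for the standard dot
product) to every codeword of `C`. -/
noncomputable def dualCode {F : Type} [Field F] {ι : Type} [Fintype ι]
    (C : Submodule F (ι → F)) : Submodule F (ι → F) :=
  ⨅ c ∈ C, LinearMap.ker (dotL c)

/-- `C` has locality `r` and availability `t`: for each coordinate `j` there are `t`
dual codewords of weight at most `r+1`, each containing `j` in its support, whose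
supports pairwise intersect exactly in `{j}`. -/
def HasAvailability {F : Type} [Field F] [DecidableEq F] {ι : Type} [Fintype ι]
    (C : Submodule F (ι → F)) (r t : ℕ) : Prop :=
  ∀ j : ι, ∃ h : Fin t → (ι → F),
    (∀ a, h a ∈ dualCode C) ∧ (∀ a, wt (h a) ≤ r + 1) ∧ (∀ a, h a j ≠ 0) ∧
    (∀ a b, a ≠ b → {l | h a l ≠ 0} ∩ {l | h b l ≠ 0} = {j})

/-- The minimum distance (minimum weight of a nonzero codeword) of a linear code. -/
noncomputable def dmin {F : Type} [Field F] [DecidableEq F] {ι : Type} [Fintype ι]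
    (C : Submodule F (ι → F)) : ℕ :=
  sInf {w | ∃ c ∈ C, c ≠ 0 ∧ wt c = w}

/-- The `i`-th generalized Hamming weight of a code `C`: the minimum support size of an
`i`-dimensional subspace of `C`. -/
noncomputable def ghw {F : Type} [Field F] {ι : Type} [Fintype ι]
    (C : Submodule F (ι → F)) (i : ℕ) : ℕ :=
  sInf {w | ∃ D : Submodule F (ι → F), D ≤ C ∧ Module.finrank F D = i ∧
    Nat.card {j : ι | ∃ v ∈ D, v j ≠ 0} = w}

/-- `d_max(n,k,r,t)` over `F`: the maximum possible minimum distance of a linear code of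
length `n` and dimension `k` over `F` with locality `r` and availability `t`. -/
noncomputable def dmax (F : Type) [Field F] [DecidableEq F] (n k r t : ℕ) : ℕ :=
  sSup {d | ∃ C : Submodule F (Fin n → F),
    Module.finrank F C = k ∧ HasAvailability C r t ∧ dmin C = d}

namespace Stmt16
open Submodule
set_option linter.unusedSectionVars false
set_option maxHeartbeats 1000000
set_option synthInstance.maxHeartbeats 200000

variable {F : Type} [Field F] [DecidableEq F] {ι : Type} [Fintype ι] [DecidableEq ι]

noncomputable def supp (v : ι → F) : Finset ι := univ.filter (fun j => v j ≠ 0)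

lemma mem_supp {v : ι → F} {j : ι} : j ∈ supp v ↔ v j ≠ 0 := by simp [supp]

lemma wt_eq_card_supp (v : ι → F) : wt v = (supp v).card := rfl

lemma dotL_apply (c v : ι → F) : dotL c v = ∑ j, c j * v j := by
  simp [dotL, LinearMap.sum_apply, LinearMap.smul_apply, smul_eq_mul]

lemma mem_dualCode {C : Submodule F (ι → F)} {v : ι → F} :
    v ∈ dualCode C ↔ ∀ c ∈ C, ∑ j, c j * v j = 0 := by
  simp [dualCode, Submodule.mem_iInf, LinearMap.mem_ker, dotL_apply]

/-- the bilinear dot product -/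
noncomputable def dotB : (ι → F) →ₗ[F] (ι → F) →ₗ[F] F where
  toFun := dotL
  map_add' c c' := by
    ext v; simp [dotL_apply, add_mul, Finset.sum_add_distrib]
  map_smul' a c := by
    ext v; simp [dotL_apply, Finset.mul_sum, mul_assoc]

lemma dotB_apply (c v : ι → F) : dotB c v = ∑ j, c j * v j := dotL_apply c v

/-- functions supported in S -/
noncomputable def ES (S : Finset ι) : Submodule F (ι → F) where
  carrier := {v | ∀ j ∉ S, v j = 0}
  add_mem' := by intro a b ha hb j hj; simp [ha j hj, hb j hj]
  zero_mem' := by intro j _; rfl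
  smul_mem' := by intro a v hv j hj; simp [hv j hj]

lemma mem_ES {S : Finset ι} {v : ι → F} : v ∈ ES S ↔ ∀ j ∉ S, v j = 0 := Iff.rfl

lemma mem_ES_iff_supp {S : Finset ι} {v : ι → F} : v ∈ ES S ↔ supp v ⊆ S := by
  constructor
  · intro h j hj
    rw [mem_supp] at hj
    by_contra hjS
    exact hj (h j hjS)
  · intro h j hj
    by_contra h0
    exact hj (h (mem_supp.2 h0))

lemma ES_mono {S T : Finset ι} (h : S ⊆ T) : (ES S : Submodule F (ι → F)) ≤ ES T := by
  intro v hv j hj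
  exact hv j (fun hjS => hj (h hjS))

noncomputable def ESequiv (S : Finset ι) : (ES S : Submodule F (ι → F)) ≃ₗ[F] ({x : ι // x ∈ S} → F) where
  toFun v := fun j => v.1 j
  map_add' := by intros; rfl
  map_smul' := by intros; rfl
  invFun w := ⟨fun j => if h : j ∈ S then w ⟨j, h⟩ else 0, by
    intro j hj
    simp [hj]⟩
  left_inv := by
    rintro ⟨v, hv⟩
    ext j
    by_cases h : j ∈ S <;> simp [h]
    exact (hv j h).symm
  right_inv := by
    intro w
    ext j
    simp [j.2]

lemma finrank_ES (S : Finset ι) : Module.finrank F (ES S : Submodule F (ι → F)) = S.card := by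
  rw [(ESequiv (F := F) S).finrank_eq, Module.finrank_pi]
  exact Fintype.card_coe S

variable (C : Submodule F (ι → F))

lemma dotB_comm (c v : ι → F) : dotB c v = dotB v c := by
  simp only [dotB_apply]
  exact Finset.sum_congr rfl (fun j _ => mul_comm _ _)

lemma dotB_single (c : ι → F) (j : ι) : dotB c (Pi.single j (1 : F)) = c j := by
  simp [dotB_apply, Pi.single_apply]

noncomputable def resMap (S : Finset ι) : (ι → F) →ₗ[F] (ι → F) where
  toFun v := fun j => if j ∈ S then v j else 0
  map_add' v w := by funext j; by_cases h : j ∈ S <;> simp [h]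
  map_smul' a v := by funext j; by_cases h : j ∈ S <;> simp [h]

lemma resMap_apply (S : Finset ι) (v : ι → F) (j : ι) :
    resMap S v j = if j ∈ S then v j else 0 := rfl

/-- rank of the code restricted to `S` -/
noncomputable def gr (S : Finset ι) : ℕ := Module.finrank F (C.map (resMap S))

/-- the shortened dual: dual vectors supported in `S` -/
noncomputable def US (S : Finset ι) : Submodule F (ι → F) := dualCode C ⊓ ES S

noncomputable def fr (S : Finset ι) : ℕ := Module.finrank F (US C S)

/-- the code shortened at `S` (codewords vanishing on `S`) -/
noncomputable def CS (S : Finset ι) : Submodule F (ι → F) := C ⊓ ES Sᶜ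

lemma mem_US {S : Finset ι} {v : ι → F} :
    v ∈ US C S ↔ v ∈ dualCode C ∧ supp v ⊆ S := by
  rw [US, Submodule.mem_inf, mem_ES_iff_supp]

lemma key2 (S : Finset ι) : gr C S + Module.finrank F (CS C S) = Module.finrank F C := by
  classical
  let φ : C →ₗ[F] (ι → F) := (resMap S).comp C.subtype
  have hrange : LinearMap.range φ = C.map (resMap S) := by
    rw [LinearMap.range_comp, Submodule.range_subtype]
  have hker : LinearMap.ker φ = Submodule.comap C.subtype (CS C S) := by
    ext c
    simp only [LinearMap.mem_ker, Submodule.mem_comap, CS, Submodule.mem_inf,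
      Submodule.subtype_apply]
    constructor
    · intro h
      refine ⟨c.2, fun j hj => ?_⟩
      have hjS : j ∈ S := by simpa using hj
      have := congrFun h j
      simp only [φ, LinearMap.comp_apply, resMap_apply, Submodule.subtype_apply] at this
      simpa [hjS] using this
    · intro ⟨_, h⟩
      funext j
      simp only [φ, LinearMap.comp_apply, resMap_apply, Submodule.subtype_apply]
      by_cases hj : j ∈ S
      · simp [hj, h j (by simp [hj])]
      · simp [hj]
  have h1 := LinearMap.finrank_range_add_finrank_ker φ
  rw [hrange, hker] at h1
  have h3 : Module.finrank F (Submodule.comap C.subtype (CS C S)) = Module.finrank F (CS C S) :=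
    (Submodule.comapSubtypeEquivOfLe (inf_le_left : CS C S ≤ C)).finrank_eq
  rw [h3] at h1
  exact h1

lemma key1 (S : Finset ι) : gr C S + fr C S = S.card := by
  classical
  let δ : C →ₗ[F] Module.Dual F (ES S : Submodule F (ι → F)) :=
    ((ES S : Submodule F (ι → F)).subtype.dualMap).comp (dotB.comp C.subtype)
  have hδ : ∀ (c : C) (v : (ES S : Submodule F (ι → F))), δ c v = dotB c.1 v.1 := by
    intro c v; rfl
  let ε : (ES S : Submodule F (ι → F)) →ₗ[F] Module.Dual F C :=
    (C.subtype.dualMap).comp (dotB.comp (ES S : Submodule F (ι → F)).subtype)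
  have hε : ∀ (v : (ES S : Submodule F (ι → F))) (c : C), ε v c = dotB v.1 c.1 := by
    intro v c; rfl
  -- kernel of δ is the shortened code
  have hkerδ : LinearMap.ker δ = Submodule.comap C.subtype (ES Sᶜ) := by
    ext c
    simp only [LinearMap.mem_ker, Submodule.mem_comap, Submodule.subtype_apply]
    constructor
    · intro h j hj
      have hj' : j ∈ S := by simpa using hj
      have hv : (Pi.single j 1 : ι → F) ∈ ES S := by
        intro m hm
        have hmj : m ≠ j := fun e => hm (e ▸ hj')
        simp [Pi.single_apply, hmj]
      have := congrFun (congrArg DFunLike.coe h) ⟨Pi.single j 1, hv⟩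
      rw [hδ] at this
      simpa [dotB_single] using this
    · intro h
      ext v
      rw [hδ]
      simp only [dotB_apply]
      apply Finset.sum_eq_zero
      intro j _
      by_cases hj : j ∈ S
      · rw [h j (by simp [hj])]; ring
      · rw [v.2 j hj]; ring
  -- kernel of ε is the shortened dual
  have hkerε : LinearMap.ker ε = Submodule.comap (ES S : Submodule F (ι → F)).subtype (US C S) := by
    ext v
    simp only [LinearMap.mem_ker, Submodule.mem_comap, Submodule.subtype_apply]
    constructor
    · intro h
      refine Submodule.mem_inf.2 ⟨?_, v.2⟩
      rw [mem_dualCode]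
      intro c hc
      have := congrFun (congrArg DFunLike.coe h) ⟨c, hc⟩
      rw [hε, dotB_comm] at this
      simpa [dotB_apply] using this
    · intro h
      ext c
      rw [hε, dotB_comm]
      have h1 := (Submodule.mem_inf.1 h).1
      rw [mem_dualCode] at h1
      simpa [dotB_apply] using h1 c.1 c.2
  -- ε is the dual map of δ composed with evaluation
  have hcomp : ε = δ.dualMap.comp (Module.evalEquiv F (ES S : Submodule F (ι → F))).toLinearMap := by
    ext v c
    rw [hε]
    simp only [LinearMap.comp_apply, LinearMap.dualMap_apply, Module.evalEquiv_toLinearMap,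
      Module.Dual.eval_apply]
    rw [hδ, dotB_comm]
  have hrankeq : Module.finrank F (LinearMap.range ε) = Module.finrank F (LinearMap.range δ) := by
    rw [hcomp, LinearMap.range_comp_of_range_eq_top _ (LinearEquiv.range _),
      LinearMap.finrank_range_dualMap_eq_finrank_range]
  -- rank-nullity on both sides
  have rnε := LinearMap.finrank_range_add_finrank_ker ε
  have rnδ := LinearMap.finrank_range_add_finrank_ker δ
  rw [hkerε] at rnε
  rw [hkerδ] at rnδ
  -- identify the kernels' ranks
  have hfr : Module.finrank F
      (Submodule.comap (ES S : Submodule F (ι → F)).subtype (US C S)) = fr C S := by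
    exact (Submodule.comapSubtypeEquivOfLe (inf_le_right : US C S ≤ ES S)).finrank_eq
  have hcs : Module.finrank F (Submodule.comap C.subtype (ES Sᶜ)) = Module.finrank F (CS C S) := by
    have h2 : Submodule.comap C.subtype (ES Sᶜ) = Submodule.comap C.subtype (CS C S) := by
      rw [CS, Submodule.comap_inf, Submodule.comap_subtype_self, top_inf_eq]
    rw [h2]
    exact (Submodule.comapSubtypeEquivOfLe (inf_le_left : CS C S ≤ C)).finrank_eq
  rw [hfr] at rnε
  rw [hcs] at rnδ
  have hES := finrank_ES (F := F) S
  have hk2 := key2 C S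
  -- finrank range δ = gr C S
  omega


lemma supp_zero : supp (0 : ι → F) = ∅ := by simp [supp]

lemma supp_eq_empty {v : ι → F} (h : supp v = ∅) : v = 0 := by
  funext j
  by_contra hj
  exact absurd (h ▸ mem_supp.2 hj) (Finset.notMem_empty j)

lemma supp_add_subset (u v : ι → F) : supp (u + v) ⊆ supp u ∪ supp v := by
  intro j hj
  rw [mem_supp] at hj
  by_contra h
  simp only [Finset.mem_union, mem_supp, not_or, not_not] at h
  exact hj (by simp [Pi.add_apply, h.1, h.2])

lemma supp_smul_subset (a : F) (v : ι → F) : supp (a • v) ⊆ supp v := by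
  intro j hj
  rw [mem_supp] at hj ⊢
  intro h
  exact hj (by simp [h])

lemma fr_mono {S T : Finset ι} (h : S ⊆ T) : fr C S ≤ fr C T :=
  Submodule.finrank_mono (inf_le_inf_left _ (ES_mono h))

lemma finrank_span_insert {v : ι → F} {s : Set (ι → F)} (hv : v ∉ Submodule.span F s) :
    Module.finrank F (Submodule.span F (insert v s)) =
      Module.finrank F (Submodule.span F s) + 1 := by
  have hv0 : v ≠ 0 := fun h => hv (h ▸ Submodule.zero_mem _)
  have hinf : Submodule.span F s ⊓ Submodule.span F {v} = ⊥ := by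
    rw [eq_bot_iff]
    rintro x ⟨hx1, hx2⟩
    obtain ⟨a, rfl⟩ := Submodule.mem_span_singleton.1 hx2
    rcases eq_or_ne a 0 with rfl | ha
    · simp
    · exact absurd ((Submodule.smul_mem_iff _ ha).1 hx1) hv
  have := Submodule.finrank_sup_add_finrank_inf_eq (Submodule.span F s) (Submodule.span F {v})
  rw [hinf, finrank_bot, add_zero, finrank_span_singleton hv0] at this
  rw [Submodule.span_insert, sup_comm]
  omega

lemma fr_insert_le (S : Finset ι) (x : ι) : fr C (insert x S) ≤ fr C S + 1 := by
  classical
  by_cases hx : x ∈ S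
  · rw [Finset.insert_eq_self.2 hx]; omega
  · set U' := US C (insert x S)
    let ev : U' →ₗ[F] F := (LinearMap.proj x).comp U'.subtype
    have hker : LinearMap.ker ev = Submodule.comap U'.subtype (US C S) := by
      ext v
      simp only [LinearMap.mem_ker, Submodule.mem_comap, LinearMap.comp_apply,
        Submodule.subtype_apply, LinearMap.proj_apply, ev]
      constructor
      · intro h
        have hv := (mem_US C).1 v.2
        refine (mem_US C).2 ⟨hv.1, fun m hm => ?_⟩
        have := hv.2 hm
        rcases Finset.mem_insert.1 this with rfl | hms
        · exact absurd (mem_supp.1 hm) (by simpa using h)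
        · exact hms
      · intro h
        by_contra h0
        exact hx ((mem_US C).1 h |>.2 (mem_supp.2 h0))
    have h1 := LinearMap.finrank_range_add_finrank_ker ev
    have h2 : Module.finrank F (LinearMap.ker ev) = fr C S := by
      rw [hker]
      exact (Submodule.comapSubtypeEquivOfLe
        (inf_le_inf_left _ (ES_mono (Finset.subset_insert x S)) : US C S ≤ U')).finrank_eq
    have h3 : Module.finrank F (LinearMap.range ev) ≤ 1 := by
      have := Submodule.finrank_le (LinearMap.range ev)
      simpa using this
    have : Module.finrank F U' = Module.finrank F (LinearMap.range ev)
        + Module.finrank F (LinearMap.ker ev) := h1.symm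
    rw [h2] at this
    have : fr C (insert x S) = Module.finrank F U' := rfl
    omega

lemma span_le_US {s : Set (ι → F)} {S : Finset ι}
    (h : ∀ v ∈ s, v ∈ dualCode C ∧ supp v ⊆ S) :
    Submodule.span F s ≤ US C S := by
  rw [Submodule.span_le]
  intro v hv
  exact (mem_US C).2 ⟨(h v hv).1, (h v hv).2⟩

lemma fr_union_disjoint {A B : Finset ι} (hd : Disjoint A B) :
    fr C A + fr C B ≤ fr C (A ∪ B) := by
  have hinf : US C A ⊓ US C B = ⊥ := by
    rw [eq_bot_iff]
    rintro x ⟨hx1, hx2⟩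
    have h1 := (mem_US C).1 hx1 |>.2
    have h2 := (mem_US C).1 hx2 |>.2
    have : supp x = ∅ := Finset.subset_empty.1 (by
      intro m hm
      exact ((Finset.disjoint_left.1 hd (h1 hm)) (h2 hm)).elim)
    simp [supp_eq_empty this, Submodule.mem_bot]
  have hsup : US C A ⊔ US C B ≤ US C (A ∪ B) :=
    sup_le (inf_le_inf_left _ (ES_mono Finset.subset_union_left))
      (inf_le_inf_left _ (ES_mono Finset.subset_union_right))
  have := Submodule.finrank_sup_add_finrank_inf_eq (US C A) (US C B)
  rw [hinf, finrank_bot, add_zero] at this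
  calc fr C A + fr C B = Module.finrank F (US C A ⊔ US C B : Submodule F (ι → F)) := this.symm
    _ ≤ fr C (A ∪ B) := Submodule.finrank_mono hsup

lemma fr_step {S : Finset ι} {p : ι → F} (hp : p ∈ dualCode C) (hns : ¬ supp p ⊆ S) :
    fr C S + 1 ≤ fr C (S ∪ supp p) := by
  have hp0 : p ≠ 0 := by
    intro h
    exact hns (by simp [h, supp_zero])
  have hpU : p ∉ US C S := fun h => hns ((mem_US C).1 h).2
  have hinf : US C S ⊓ Submodule.span F {p} = ⊥ := by
    rw [eq_bot_iff]
    rintro x ⟨hx1, hx2⟩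
    obtain ⟨a, rfl⟩ := Submodule.mem_span_singleton.1 hx2
    rcases eq_or_ne a 0 with rfl | ha
    · simp
    · exact absurd ((Submodule.smul_mem_iff _ ha).1 hx1) hpU
  have hsup : US C S ⊔ Submodule.span F {p} ≤ US C (S ∪ supp p) := by
    refine sup_le (inf_le_inf_left _ (ES_mono Finset.subset_union_left)) ?_
    refine span_le_US C (fun v hv => ?_)
    rcases Set.mem_singleton_iff.1 hv with rfl
    exact ⟨hp, Finset.subset_union_right⟩
  have := Submodule.finrank_sup_add_finrank_inf_eq (US C S) (Submodule.span F {p})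
  rw [hinf, finrank_bot, add_zero, finrank_span_singleton hp0] at this
  calc fr C S + 1 = Module.finrank F (US C S ⊔ Submodule.span F {p} : Submodule F (ι → F)) := this.symm
    _ ≤ fr C (S ∪ supp p) := Submodule.finrank_mono hsup

lemma gr_univ : gr C Finset.univ = Module.finrank F C := by
  have : resMap (Finset.univ : Finset ι) = (LinearMap.id : (ι → F) →ₗ[F] (ι → F)) := by
    ext v j
    simp [resMap_apply]
  rw [gr, this, Submodule.map_id]


attribute [local instance] Classical.propDecidable

/-- coordinates where the code identically vanishes -/
noncomputable def Zset : Finset ι := Finset.univ.filter (fun j => ∀ c ∈ C, c j = 0)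

lemma mem_Zset {j : ι} : j ∈ Zset C ↔ ∀ c ∈ C, c j = 0 := by
  simp [Zset]

lemma single_mem_dualCode {j : ι} (hj : j ∈ Zset C) : Pi.single j (1 : F) ∈ dualCode C := by
  rw [mem_dualCode]
  intro c hc
  have := dotB_single c j
  rw [dotB_apply] at this
  rw [this]
  exact (mem_Zset C).1 hj c hc

lemma mem_Zset_of_single {j : ι} (h : Pi.single j (1 : F) ∈ dualCode C) : j ∈ Zset C := by
  rw [mem_dualCode] at h
  rw [mem_Zset]
  intro c hc
  simpa [Pi.single_apply, mul_ite] using h c hc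

lemma mem_Zset_of_supp_singleton {j : ι} {v : ι → F} (hv : v ∈ dualCode C)
    (hs : supp v = {j}) : j ∈ Zset C := by
  have hvj : v j ≠ 0 := mem_supp.1 (hs ▸ Finset.mem_singleton_self j)
  have : Pi.single j (1 : F) = (v j)⁻¹ • v := by
    funext m
    rcases eq_or_ne m j with rfl | hm
    · simp [inv_mul_cancel₀ hvj]
    · have : v m = 0 := by
        by_contra h0
        exact hm (Finset.mem_singleton.1 (hs ▸ mem_supp.2 h0))
      simp [Pi.single_apply, hm, this]
  exact mem_Zset_of_single C (this ▸ Submodule.smul_mem _ _ hv)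

lemma resMap_mem_dualCode {v : ι → F} (hv : v ∈ dualCode C) :
    resMap (Zset C)ᶜ v ∈ dualCode C := by
  rw [mem_dualCode] at hv ⊢
  intro c hc
  rw [← hv c hc]
  refine Finset.sum_congr rfl (fun m _ => ?_)
  rw [resMap_apply]
  by_cases hm : m ∈ (Zset C)ᶜ
  · simp [hm]
  · have : m ∈ Zset C := by simpa using hm
    simp [hm, (mem_Zset C).1 this c hc]

lemma supp_resMap_subset (S : Finset ι) (v : ι → F) : supp (resMap S v) ⊆ supp v ∩ S := by
  intro m hm
  rw [mem_supp, resMap_apply] at hm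
  by_cases h : m ∈ S
  · simp only [h, if_true] at hm
    exact Finset.mem_inter.2 ⟨mem_supp.2 hm, h⟩
  · simp [h] at hm

/-- existence of a reduced orthogonal pair at each nondegenerate coordinate -/
lemma exists_pair {r t : ℕ} (ht : 2 ≤ t) (hav : HasAvailability C r t) (j : ι)
    (hj : j ∉ Zset C) :
    ∃ p q : ι → F, p ∈ dualCode C ∧ q ∈ dualCode C ∧ supp p ⊆ (Zset C)ᶜ ∧
      supp q ⊆ (Zset C)ᶜ ∧ (supp p).card ≤ r + 1 ∧ (supp q).card ≤ r + 1 ∧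
      2 ≤ (supp p).card ∧ 2 ≤ (supp q).card ∧ p j ≠ 0 ∧ q j ≠ 0 ∧
      supp p ∩ supp q = {j} := by
  obtain ⟨h, hdual, hwt, hnz, hint⟩ := hav j
  have h01 : (⟨0, by omega⟩ : Fin t) ≠ ⟨1, by omega⟩ := by
    intro e
    simpa using congrArg Fin.val e
  set a : Fin t := ⟨0, by omega⟩
  set b : Fin t := ⟨1, by omega⟩
  set p := resMap (Zset C)ᶜ (h a) with hp
  set q := resMap (Zset C)ᶜ (h b) with hq
  have hjz : j ∈ (Zset C)ᶜ := by simpa using hj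
  have hpj : p j = h a j := by rw [hp, resMap_apply, if_pos hjz]
  have hqj : q j = h b j := by rw [hq, resMap_apply, if_pos hjz]
  have hsuppp : supp p ⊆ supp (h a) ∩ (Zset C)ᶜ := supp_resMap_subset _ _
  have hsuppq : supp q ⊆ supp (h b) ∩ (Zset C)ᶜ := supp_resMap_subset _ _
  have hpd : p ∈ dualCode C := resMap_mem_dualCode C (hdual a)
  have hqd : q ∈ dualCode C := resMap_mem_dualCode C (hdual b)
  have hint' : supp p ∩ supp q = {j} := by
    ext m
    simp only [Finset.mem_inter, Finset.mem_singleton]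
    constructor
    · intro ⟨h1, h2⟩
      have h1' : h a m ≠ 0 := by
        have := hsuppp h1
        rw [Finset.mem_inter, mem_supp] at this
        exact this.1
      have h2' : h b m ≠ 0 := by
        have := hsuppq h2
        rw [Finset.mem_inter, mem_supp] at this
        exact this.1
      have := hint a b h01
      have hm : m ∈ ({l | h a l ≠ 0} ∩ {l | h b l ≠ 0} : Set ι) := ⟨h1', h2'⟩
      rw [this] at hm
      exact hm
    · rintro rfl
      constructor
      · exact mem_supp.2 (hpj ▸ hnz a)
      · exact mem_supp.2 (hqj ▸ hnz b)
  have hcard2 : ∀ v : ι → F, v ∈ dualCode C → v j ≠ 0 → supp v ⊆ (Zset C)ᶜ →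
      2 ≤ (supp v).card := by
    intro v hvd hvj hvz
    by_contra hlt
    push_neg at hlt
    have hjv : j ∈ supp v := mem_supp.2 hvj
    have : supp v = {j} := by
      apply Finset.eq_singleton_iff_unique_mem.2
      refine ⟨hjv, fun m hm => ?_⟩
      by_contra hne
      have : 2 ≤ (supp v).card := Finset.one_lt_card.2 ⟨m, hm, j, hjv, hne⟩
      omega
    have hjz : j ∉ Zset C := by simpa using hvz hjv
    exact hjz (mem_Zset_of_supp_singleton C hvd this)
  refine ⟨p, q, hpd, hqd, fun m hm => (Finset.mem_inter.1 (hsuppp hm)).2,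
    fun m hm => (Finset.mem_inter.1 (hsuppq hm)).2, ?_, ?_, ?_, ?_, hpj ▸ hnz a, hqj ▸ hnz b, hint'⟩
  · calc (supp p).card ≤ (supp (h a) ∩ (Zset C)ᶜ).card := Finset.card_le_card hsuppp
      _ ≤ (supp (h a)).card := Finset.card_le_card Finset.inter_subset_left
      _ ≤ r + 1 := hwt a
  · calc (supp q).card ≤ (supp (h b) ∩ (Zset C)ᶜ).card := Finset.card_le_card hsuppq
      _ ≤ (supp (h b)).card := Finset.card_le_card Finset.inter_subset_left
      _ ≤ r + 1 := hwt b
  · exact hcard2 p hpd (hpj ▸ hnz a) (fun m hm => (Finset.mem_inter.1 (hsuppp hm)).2)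
  · exact hcard2 q hqd (hqj ▸ hnz b) (fun m hm => (Finset.mem_inter.1 (hsuppq hm)).2)


noncomputable def cover (L : List (ι → F)) : Finset ι := L.foldr (fun v T => supp v ∪ T) ∅

lemma cover_nil : cover ([] : List (ι → F)) = ∅ := rfl

lemma cover_cons (v : ι → F) (L : List (ι → F)) : cover (v :: L) = supp v ∪ cover L := rfl

lemma supp_subset_cover {v : ι → F} {L : List (ι → F)} (h : v ∈ L) : supp v ⊆ cover L := by
  induction L with
  | nil => simp at h
  | cons w L ih =>
    rcases List.mem_cons.1 h with rfl | h
    · rw [cover_cons]; exact Finset.subset_union_left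
    · rw [cover_cons]; exact (ih h).trans Finset.subset_union_right

lemma supp_subset_cover_of_mem_span {L : List (ι → F)} {v : ι → F}
    (h : v ∈ Submodule.span F {x | x ∈ L}) : supp v ⊆ cover L := by
  induction h using Submodule.span_induction with
  | mem x hx => exact supp_subset_cover hx
  | zero => simp [supp_zero]
  | add x y _ _ hx hy =>
    exact (supp_add_subset x y).trans (Finset.union_subset hx hy)
  | smul a x _ hx => exact (supp_smul_subset a x).trans hx

def IsChain (G : Finset (ι → F)) (j₀ : ι) : List (ι → F) → Prop
  | [] => True
  | v :: L => v ∈ G ∧ v ∉ Submodule.span F {x | x ∈ L} ∧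
      (L = [] → j₀ ∈ supp v) ∧ (L ≠ [] → (supp v ∩ cover L).Nonempty) ∧
      IsChain G j₀ L

lemma isChain_cons {G : Finset (ι → F)} {j₀ : ι} {v : ι → F} {L : List (ι → F)} :
    IsChain G j₀ (v :: L) ↔ v ∈ G ∧ v ∉ Submodule.span F {x | x ∈ L} ∧
      (L = [] → j₀ ∈ supp v) ∧ (L ≠ [] → (supp v ∩ cover L).Nonempty) ∧
      IsChain G j₀ L := Iff.rfl

lemma chain_subset_G {G : Finset (ι → F)} {j₀ : ι} {L : List (ι → F)}
    (h : IsChain G j₀ L) : ∀ v ∈ L, v ∈ G := by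
  induction L with
  | nil => simp
  | cons w L ih =>
    intro v hv
    rcases List.mem_cons.1 hv with rfl | hv
    · exact h.1
    · exact ih h.2.2.2.2 v hv

lemma chain_card_cover {r : ℕ} {G : Finset (ι → F)} {j₀ : ι} {L : List (ι → F)}
    (hG : ∀ g ∈ G, (supp g).card ≤ r + 1)
    (h : IsChain G j₀ L) : (cover L).card ≤ r * L.length + 1 := by
  induction L with
  | nil => simp [cover_nil]
  | cons v L ih =>
    rw [cover_cons]
    rcases eq_or_ne L [] with rfl | hL
    · simp only [cover_nil, Finset.sdiff_empty, Finset.card_empty, add_zero,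
        Finset.union_empty] at *
      have := hG v h.1
      simp only [List.length_cons, List.length_nil]
      omega
    · have hne := h.2.2.2.1 hL
      have h1 : (supp v \ cover L).card + (supp v ∩ cover L).card = (supp v).card :=
        Finset.card_sdiff_add_card_inter _ _
      have h2 : 1 ≤ (supp v ∩ cover L).card := Finset.card_pos.2 hne
      have h3 := hG v h.1
      have h4 := ih h.2.2.2.2
      have h5 : (supp v ∪ cover L).card ≤ (supp v \ cover L).card + (cover L).card :=
        le_of_eq (Finset.card_sdiff_add_card _ _).symm
      simp only [List.length_cons]
      have : (supp v \ cover L).card ≤ r := by omega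
      calc (supp v ∪ cover L).card ≤ (supp v \ cover L).card + (cover L).card := h5
        _ ≤ r + (r * L.length + 1) := by omega
        _ = r * (L.length + 1) + 1 := by ring

lemma chain_finrank {G : Finset (ι → F)} {j₀ : ι} {L : List (ι → F)}
    (h : IsChain G j₀ L) :
    Module.finrank F (Submodule.span F {x | x ∈ L}) = L.length := by
  induction L with
  | nil =>
    have : ({x | x ∈ ([] : List (ι → F))} : Set (ι → F)) = ∅ := by simp
    simp [this]
  | cons v L ih =>
    have hset : ({x | x ∈ v :: L} : Set (ι → F)) = insert v {x | x ∈ L} := by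
      ext x; simp [List.mem_cons]
    rw [hset, finrank_span_insert h.2.1, ih h.2.2.2.2]
    simp

lemma chain_length_le_fr {S₁ : Finset ι} {G : Finset (ι → F)} {j₀ : ι} {L : List (ι → F)}
    (hG : ∀ g ∈ G, g ∈ dualCode C ∧ supp g ⊆ S₁)
    (h : IsChain G j₀ L) : L.length ≤ fr C S₁ := by
  rw [← chain_finrank h]
  apply Submodule.finrank_mono
  apply span_le_US
  intro v hv
  exact hG v (chain_subset_G h v hv)


lemma cover_subset {S₁ : Finset ι} {L : List (ι → F)} (h : ∀ v ∈ L, supp v ⊆ S₁) :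
    cover L ⊆ S₁ := by
  induction L with
  | nil => simp [cover_nil]
  | cons v L ih =>
    rw [cover_cons]
    exact Finset.union_subset (h v (by simp)) (ih (fun w hw => h w (List.mem_cons_of_mem v hw)))

lemma chain_j0_mem_cover {G : Finset (ι → F)} {j₀ : ι} {L : List (ι → F)}
    (h : IsChain G j₀ L) (hL : L ≠ []) : j₀ ∈ cover L := by
  induction L with
  | nil => exact absurd rfl hL
  | cons v M ih =>
    rw [cover_cons]
    rcases eq_or_ne M [] with rfl | hM
    · exact Finset.mem_union_left _ (h.2.2.1 rfl)
    · exact Finset.mem_union_right _ (ih h.2.2.2.2 hM)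

lemma chain_terminal {S₁ : Finset ι} {G : Finset (ι → F)} {j₀ : ι}
    (hG : ∀ g ∈ G, g ∈ dualCode C ∧ supp g ⊆ S₁ ∧ (supp g).Nonempty)
    (hpairj₀ : ∃ p ∈ G, p j₀ ≠ 0)
    (hstraddle : ∀ T : Finset ι, j₀ ∈ T → T ⊆ S₁ → ∀ y ∈ S₁, y ∉ T →
      ∃ g ∈ G, (supp g ∩ T).Nonempty ∧ ¬ supp g ⊆ T) :
    ∀ N : ℕ, ∃ L : List (ι → F), IsChain G j₀ L ∧
      ((∀ g ∈ G, g ∈ Submodule.span F {x | x ∈ L}) ∨ N ≤ L.length) := by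
  intro N
  induction N with
  | zero => exact ⟨[], trivial, Or.inr (Nat.zero_le _)⟩
  | succ N ih =>
    obtain ⟨L, hL, hdisj⟩ := ih
    by_cases hterm : ∀ g ∈ G, g ∈ Submodule.span F {x | x ∈ L}
    · exact ⟨L, hL, Or.inl hterm⟩
    push_neg at hterm
    obtain ⟨g₁, hg₁G, hg₁span⟩ := hterm
    have hlen : N ≤ L.length := by
      rcases hdisj with h | h
      · exact absurd (h g₁ hg₁G) hg₁span
      · exact h
    rcases eq_or_ne L [] with rfl | hLne
    · -- start the chain with a generator through j₀
      obtain ⟨p, hpG, hpj₀⟩ := hpairj₀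
      refine ⟨[p], ⟨hpG, ?_, fun _ => mem_supp.2 hpj₀, fun h => absurd rfl h, trivial⟩,
        Or.inr (by simp at hlen ⊢; omega)⟩
      have hempty : ({x | x ∈ ([] : List (ι → F))} : Set (ι → F)) = ∅ := by simp
      rw [hempty, Submodule.span_empty]
      simp only [Submodule.mem_bot]
      intro h
      exact hpj₀ (by simp [h])
    -- L nonempty: extend it
    have hLsub : ∀ v ∈ L, supp v ⊆ S₁ := fun v hv => (hG v (chain_subset_G hL v hv)).2.1
    have hcovS₁ : cover L ⊆ S₁ := cover_subset hLsub
    have hj₀cov : j₀ ∈ cover L := chain_j0_mem_cover hL hLne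
    -- find an extender
    have hext : ∃ g, g ∈ G ∧ g ∉ Submodule.span F {x | x ∈ L} ∧
        (supp g ∩ cover L).Nonempty := by
      by_cases hScov : S₁ ⊆ cover L
      · refine ⟨g₁, hg₁G, hg₁span, ?_⟩
        obtain ⟨m, hm⟩ := (hG g₁ hg₁G).2.2
        exact ⟨m, Finset.mem_inter.2 ⟨hm, hScov ((hG g₁ hg₁G).2.1 hm)⟩⟩
      · obtain ⟨y, hyS₁, hycov⟩ := Finset.not_subset.1 hScov
        obtain ⟨g, hgG, hgint, hgnsub⟩ := hstraddle (cover L) hj₀cov hcovS₁ y hyS₁ hycov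
        refine ⟨g, hgG, ?_, hgint⟩
        intro hspan
        exact hgnsub (supp_subset_cover_of_mem_span hspan)
    obtain ⟨g, hgG, hgspan, hgint⟩ := hext
    exact ⟨g :: L, ⟨hgG, hgspan, fun h => absurd h hLne, fun _ => hgint, hL⟩,
      Or.inr (by simp only [List.length_cons]; omega)⟩

/-- Core counting lemma: a nonempty "closed, connected" set with orthogonal pairs
at every point satisfies `|S₁| ≤ r · f(S₁)`. -/
lemma core {r : ℕ} (hr : 2 ≤ r) (S₁ : Finset ι) (G : Finset (ι → F)) (j₀ : ι)
    (hj₀ : j₀ ∈ S₁)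
    (hG : ∀ g ∈ G, g ∈ dualCode C ∧ supp g ⊆ S₁ ∧ 2 ≤ (supp g).card ∧
      (supp g).card ≤ r + 1)
    (hpair : ∀ j ∈ S₁, ∃ p ∈ G, ∃ q ∈ G, p j ≠ 0 ∧ q j ≠ 0 ∧ supp p ∩ supp q = {j})
    (hstraddle : ∀ T : Finset ι, j₀ ∈ T → T ⊆ S₁ → ∀ y ∈ S₁, y ∉ T →
      ∃ g ∈ G, (supp g ∩ T).Nonempty ∧ ¬ supp g ⊆ T) :
    S₁.card ≤ r * fr C S₁ := by
  have hG' : ∀ g ∈ G, g ∈ dualCode C ∧ supp g ⊆ S₁ ∧ (supp g).Nonempty := by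
    intro g hg
    obtain ⟨h1, h2, h3, _⟩ := hG g hg
    exact ⟨h1, h2, Finset.card_pos.1 (by omega)⟩
  have hpairj₀ : ∃ p ∈ G, p j₀ ≠ 0 := by
    obtain ⟨p, hpG, _, _, hpj, _⟩ := hpair j₀ hj₀
    exact ⟨p, hpG, hpj⟩
  obtain ⟨L, hL, hdisj⟩ := chain_terminal C hG' hpairj₀ hstraddle (fr C S₁ + 1)
  have hlenle : L.length ≤ fr C S₁ :=
    chain_length_le_fr C (fun g hg => ⟨(hG g hg).1, (hG g hg).2.1⟩) hL
  have hterm : ∀ g ∈ G, g ∈ Submodule.span F {x | x ∈ L} := by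
    rcases hdisj with h | h
    · exact h
    · omega
  -- L is nonempty
  rcases L with _ | ⟨v, L''⟩
  · exfalso
    obtain ⟨p, hpG, hpj⟩ := hpairj₀
    have := hterm p hpG
    have hempty : ({x | x ∈ ([] : List (ι → F))} : Set (ι → F)) = ∅ := by simp
    rw [hempty, Submodule.span_empty, Submodule.mem_bot] at this
    exact hpj (by simp [this])
  -- the set of points newly covered by the head of the chain
  set A : Finset ι := supp v \ cover L'' with hA
  have hspanL : ∀ w, w ∈ Submodule.span F {x | x ∈ v :: L''} →
      ∃ a : F, ∃ z : ι → F, z ∈ Submodule.span F {x | x ∈ L''} ∧ w = a • v + z := by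
    intro w hw
    have hset : ({x | x ∈ v :: L''} : Set (ι → F)) = insert v {x | x ∈ L''} := by
      ext x; simp [List.mem_cons]
    rw [hset] at hw
    obtain ⟨a, z, hz, rfl⟩ := Submodule.mem_span_insert.1 hw
    exact ⟨a, z, hz, rfl⟩
  -- any generator not vanishing at a point of A has support containing all of A
  have hall : ∀ j ∈ A, ∀ w ∈ G, w j ≠ 0 → A ⊆ supp w := by
    intro j hj w hwG hwj
    obtain ⟨a, z, hz, hw⟩ := hspanL w (hterm w hwG)
    have hzA : ∀ l ∈ A, z l = 0 := by
      intro l hl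
      have := supp_subset_cover_of_mem_span hz
      by_contra h0
      exact (Finset.mem_sdiff.1 hl).2 (this (mem_supp.2 h0))
    have hvj : v j ≠ 0 := mem_supp.1 (Finset.mem_sdiff.1 hj).1
    have haj : w j = a * v j := by rw [hw]; simp [hzA j hj]
    have ha : a ≠ 0 := by
      intro h0
      rw [h0, zero_mul] at haj
      exact hwj haj
    intro l hl
    have hvl : v l ≠ 0 := mem_supp.1 (Finset.mem_sdiff.1 hl).1
    have : w l = a * v l := by rw [hw]; simp [hzA l hl]
    exact mem_supp.2 (this ▸ mul_ne_zero ha hvl)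
  -- A has at most one element
  have hAcard : A.card ≤ 1 := by
    by_contra hA2
    push_neg at hA2
    obtain ⟨x, hx, y, hy, hxy⟩ := Finset.one_lt_card.1 hA2
    have hxS₁ : x ∈ S₁ := (hG v hL.1).2.1 (Finset.mem_sdiff.1 hx).1
    obtain ⟨p, hpG, q, hqG, hpx, hqx, hint⟩ := hpair x hxS₁
    have h1 : A ⊆ supp p := hall x hx p hpG hpx
    have h2 : A ⊆ supp q := hall x hx q hqG hqx
    have : y ∈ ({x} : Finset ι) := hint ▸ Finset.mem_inter.2 ⟨h1 hy, h2 hy⟩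
    exact hxy (Finset.mem_singleton.1 this).symm
  -- L'' is nonempty
  rcases eq_or_ne L'' [] with rfl | hL'' 
  · exfalso
    have h1 : A = supp v := by rw [hA, cover_nil, Finset.sdiff_empty]
    have h2 := (hG v hL.1).2.2.1
    rw [h1] at hAcard
    omega
  -- final counting
  have hScov : S₁ ⊆ cover (v :: L'') := by
    intro j hj
    obtain ⟨p, hpG, _, _, hpj, _, _⟩ := hpair j hj
    exact supp_subset_cover_of_mem_span (hterm p hpG) (mem_supp.2 hpj)
  have hcovcard : (cover (v :: L'')).card ≤ (cover L'').card + 1 := by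
    rw [cover_cons]
    have h1 := Finset.card_sdiff_add_card (supp v) (cover L'')
    rw [← hA] at h1
    omega
  have hcard'' := chain_card_cover (fun g hg => (hG g hg).2.2.2) hL.2.2.2.2
  have hlen'' : 1 ≤ L''.length := by
    rcases L'' with _ | _
    · exact absurd rfl hL''
    · simp
  calc S₁.card ≤ (cover (v :: L'')).card := Finset.card_le_card hScov
    _ ≤ (cover L'').card + 1 := hcovcard
    _ ≤ r * L''.length + 2 := by omega
    _ ≤ r * (L''.length + 1) := by
        have hmul : r * (L''.length + 1) = r * L''.length + r := by ring
        omega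
    _ = r * (v :: L'').length := by simp [List.length_cons]
    _ ≤ r * fr C S₁ := Nat.mul_le_mul_left r hlenle

lemma supp_single {j : ι} : supp (Pi.single j (1 : F)) = {j} := by
  ext m
  rcases eq_or_ne m j with rfl | hm
  · simp [mem_supp]
  · simp [mem_supp, Pi.single_apply, hm]

lemma one_le_fr {S : Finset ι} {v : ι → F} (hv : v ∈ US C S) (hv0 : v ≠ 0) :
    1 ≤ fr C S := by
  have h1 : Submodule.span F {v} ≤ US C S := by
    rw [Submodule.span_le, Set.singleton_subset_iff]
    exact hv
  have h2 : Module.finrank F (Submodule.span F {v}) ≤ fr C S := Submodule.finrank_mono h1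
  rwa [finrank_span_singleton hv0] at h2

/-- the standing hypotheses on the chosen reduced pairs -/
def PairProps (r : ℕ) (P Q : ι → ι → F) : Prop :=
  ∀ j, j ∉ Zset C →
    P j ∈ dualCode C ∧ Q j ∈ dualCode C ∧
    supp (P j) ⊆ (Zset C)ᶜ ∧ supp (Q j) ⊆ (Zset C)ᶜ ∧
    (supp (P j)).card ≤ r + 1 ∧ (supp (Q j)).card ≤ r + 1 ∧
    2 ≤ (supp (P j)).card ∧ 2 ≤ (supp (Q j)).card ∧
    P j j ≠ 0 ∧ Q j j ≠ 0 ∧ supp (P j) ∩ supp (Q j) = {j}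

lemma stuck_card_le {r : ℕ} (hr : 2 ≤ r) (P Q : ι → ι → F) (hPQ : PairProps C r P Q) :
    ∀ S : Finset ι, (∀ j ∈ S, j ∉ Zset C → supp (P j) ⊆ S ∧ supp (Q j) ⊆ S) →
      S.card ≤ r * fr C S := by
  intro S
  induction S using Finset.strongInductionOn with
  | _ S ih =>
  intro hstuck
  rcases S.eq_empty_or_nonempty with rfl | ⟨j₀, hj₀⟩
  · simp
  by_cases hz : j₀ ∈ Zset C
  · -- degenerate coordinate: split off the singleton {j₀}
    set rest := S.erase j₀ with hrest
    have hrestss : rest ⊂ S := Finset.erase_ssubset hj₀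
    have hreststuck : ∀ j ∈ rest, j ∉ Zset C → supp (P j) ⊆ rest ∧ supp (Q j) ⊆ rest := by
      intro j hj hjz
      have hjS : j ∈ S := Finset.mem_of_mem_erase hj
      obtain ⟨h1, h2⟩ := hstuck j hjS hjz
      obtain ⟨_, _, h3, h4, _⟩ := hPQ j hjz
      constructor
      · exact Finset.subset_erase.2 ⟨h1, fun hmem => by simpa [hz] using h3 hmem⟩
      · exact Finset.subset_erase.2 ⟨h2, fun hmem => by simpa [hz] using h4 hmem⟩
    have hcardrest := ih rest hrestss hreststuck
    have hfr1 : 1 ≤ fr C {j₀} := by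
      refine one_le_fr C (v := Pi.single j₀ (1 : F)) ?_ ?_
      · refine (mem_US C).2 ⟨single_mem_dualCode C hz, ?_⟩
        rw [supp_single]
      · intro h
        have := congrFun h j₀
        simp at this
    have hdisj : Disjoint {j₀} rest := by
      simp [hrest, Finset.disjoint_singleton_left]
    have hunion : {j₀} ∪ rest = S := by
      rw [hrest]
      ext m
      simp only [Finset.mem_union, Finset.mem_singleton, Finset.mem_erase]
      constructor
      · rintro (rfl | ⟨_, hm⟩)
        · exact hj₀
        · exact hm
      · intro hm
        rcases eq_or_ne m j₀ with rfl | hne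
        · exact Or.inl rfl
        · exact Or.inr ⟨hne, hm⟩
    have hfradd := fr_union_disjoint C hdisj
    rw [hunion] at hfradd
    have hcardS : S.card = rest.card + 1 := by
      rw [hrest, Finset.card_erase_of_mem hj₀]
      have : 1 ≤ S.card := Finset.card_pos.2 ⟨j₀, hj₀⟩
      omega
    have hfrS : fr C {j₀} + fr C rest ≤ fr C S := hfradd
    have hmul : r * (fr C rest + 1) = r * fr C rest + r := by ring
    have hmono : r * (fr C rest + 1) ≤ r * fr C S := Nat.mul_le_mul_left r (by omega)
    omega
  · -- main case: extract the connected component of j₀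
    set Rel : ι → ι → Prop := fun x y => ∃ j, j ∈ S ∧ j ∉ Zset C ∧
      ((x ∈ supp (P j) ∧ y ∈ supp (P j)) ∨ (x ∈ supp (Q j) ∧ y ∈ supp (Q j))) with hRel
    set S₁ : Finset ι := S.filter (fun y => Relation.ReflTransGen Rel j₀ y) with hS₁
    have hS₁sub : S₁ ⊆ S := Finset.filter_subset _ _
    have hj₀S₁ : j₀ ∈ S₁ := by
      rw [hS₁, Finset.mem_filter]
      exact ⟨hj₀, Relation.ReflTransGen.refl⟩
    have hmemS₁ : ∀ y, y ∈ S → Relation.ReflTransGen Rel j₀ y → y ∈ S₁ := by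
      intro y hyS hy
      rw [hS₁, Finset.mem_filter]
      exact ⟨hyS, hy⟩
    have hreachS₁ : ∀ x y, x ∈ S₁ → Rel x y → y ∈ S → y ∈ S₁ := by
      intro x y hx hxy hyS
      rw [hS₁, Finset.mem_filter] at hx
      exact hmemS₁ y hyS (hx.2.tail hxy)
    have hjsupp : ∀ j, j ∉ Zset C → j ∈ supp (P j) ∧ j ∈ supp (Q j) := by
      intro j hjz
      obtain ⟨_, _, _, _, _, _, _, _, h1, h2, _⟩ := hPQ j hjz
      exact ⟨mem_supp.2 h1, mem_supp.2 h2⟩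
    have hsuppS₁ : ∀ j ∈ S₁, j ∉ Zset C → supp (P j) ⊆ S₁ ∧ supp (Q j) ⊆ S₁ := by
      intro j hj hjz
      have hjS : j ∈ S := hS₁sub hj
      obtain ⟨h1, h2⟩ := hstuck j hjS hjz
      constructor
      · intro m hm
        exact hreachS₁ j m hj ⟨j, hjS, hjz, Or.inl ⟨(hjsupp j hjz).1, hm⟩⟩ (h1 hm)
      · intro m hm
        exact hreachS₁ j m hj ⟨j, hjS, hjz, Or.inr ⟨(hjsupp j hjz).2, hm⟩⟩ (h2 hm)
    have hS₁Z : ∀ y ∈ S₁, y ∉ Zset C := by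
      intro y hy
      rw [hS₁, Finset.mem_filter] at hy
      rcases (Relation.ReflTransGen.cases_tail hy.2) with rfl | ⟨x, _, hxy⟩
      · exact hz
      · obtain ⟨j, hjS, hjz, hcase⟩ := hxy
        obtain ⟨_, _, h3, h4, _⟩ := hPQ j hjz
        rcases hcase with ⟨_, hy'⟩ | ⟨_, hy'⟩
        · intro hc; simpa [hc] using h3 hy'
        · intro hc; simpa [hc] using h4 hy'
    -- the generators of the component
    set G : Finset (ι → F) := S₁.image (fun j => P j) ∪ S₁.image (fun j => Q j) with hG
    have hGmem : ∀ g ∈ G, ∃ j ∈ S₁, g = P j ∨ g = Q j := by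
      intro g hg
      rw [hG, Finset.mem_union] at hg
      rcases hg with hg | hg
      · obtain ⟨j, hj, rfl⟩ := Finset.mem_image.1 hg
        exact ⟨j, hj, Or.inl rfl⟩
      · obtain ⟨j, hj, rfl⟩ := Finset.mem_image.1 hg
        exact ⟨j, hj, Or.inr rfl⟩
    have hGprop : ∀ g ∈ G, g ∈ dualCode C ∧ supp g ⊆ S₁ ∧ 2 ≤ (supp g).card ∧
        (supp g).card ≤ r + 1 := by
      intro g hg
      obtain ⟨j, hj, hcase⟩ := hGmem g hg
      have hjz := hS₁Z j hj
      obtain ⟨d1, d2, _, _, c1, c2, c3, c4, _⟩ := hPQ j hjz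
      obtain ⟨s1, s2⟩ := hsuppS₁ j hj hjz
      rcases hcase with rfl | rfl
      · exact ⟨d1, s1, c3, c1⟩
      · exact ⟨d2, s2, c4, c2⟩
    have hpair : ∀ j ∈ S₁, ∃ p ∈ G, ∃ q ∈ G, p j ≠ 0 ∧ q j ≠ 0 ∧
        supp p ∩ supp q = {j} := by
      intro j hj
      have hjz := hS₁Z j hj
      obtain ⟨_, _, _, _, _, _, _, _, n1, n2, hint⟩ := hPQ j hjz
      refine ⟨P j, ?_, Q j, ?_, n1, n2, hint⟩
      · rw [hG, Finset.mem_union]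
        exact Or.inl (Finset.mem_image_of_mem _ hj)
      · rw [hG, Finset.mem_union]
        exact Or.inr (Finset.mem_image_of_mem _ hj)
    have hstraddle : ∀ T : Finset ι, j₀ ∈ T → T ⊆ S₁ → ∀ y ∈ S₁, y ∉ T →
        ∃ g ∈ G, (supp g ∩ T).Nonempty ∧ ¬ supp g ⊆ T := by
      intro T hj₀T hTS₁ y hyS₁ hyT
      rw [hS₁, Finset.mem_filter] at hyS₁
      have haux : ∀ y', Relation.ReflTransGen Rel j₀ y' → y' ∉ T →
          ∃ g ∈ G, (supp g ∩ T).Nonempty ∧ ¬ supp g ⊆ T := by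
        intro y' hy'
        induction hy' with
        | refl => exact fun h => absurd hj₀T h
        | tail hreach hrel ihy =>
          rename_i x y''
          intro hy''T
          by_cases hxT : x ∈ T
          · obtain ⟨j, hjS, hjz, hcase⟩ := hrel
            have hxS₁ : x ∈ S₁ := hTS₁ hxT
            -- j is also reachable
            have hjS₁ : j ∈ S₁ := by
              rcases hcase with ⟨hx', _⟩ | ⟨hx', _⟩
              · exact hreachS₁ x j hxS₁ ⟨j, hjS, hjz, Or.inl ⟨hx', (hjsupp j hjz).1⟩⟩ hjS
              · exact hreachS₁ x j hxS₁ ⟨j, hjS, hjz, Or.inr ⟨hx', (hjsupp j hjz).2⟩⟩ hjS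
            rcases hcase with ⟨hx', hy'⟩ | ⟨hx', hy'⟩
            · refine ⟨P j, ?_, ⟨x, Finset.mem_inter.2 ⟨hx', hxT⟩⟩, fun hsub => hy''T (hsub hy')⟩
              rw [hG, Finset.mem_union]
              exact Or.inl (Finset.mem_image_of_mem _ hjS₁)
            · refine ⟨Q j, ?_, ⟨x, Finset.mem_inter.2 ⟨hx', hxT⟩⟩, fun hsub => hy''T (hsub hy')⟩
              rw [hG, Finset.mem_union]
              exact Or.inr (Finset.mem_image_of_mem _ hjS₁)
          · exact ihy hxT
      exact haux y hyS₁.2 hyT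
    have hcoreS₁ := core C hr S₁ G j₀ hj₀S₁ hGprop hpair hstraddle
    -- the rest of the set is still stuck
    set rest := S \ S₁ with hrest
    have hrestss : rest ⊂ S :=
      Finset.sdiff_ssubset (Finset.filter_subset _ _) ⟨j₀, hj₀S₁⟩
    have hreststuck : ∀ j ∈ rest, j ∉ Zset C → supp (P j) ⊆ rest ∧ supp (Q j) ⊆ rest := by
      intro j hj hjz
      rw [hrest, Finset.mem_sdiff] at hj
      obtain ⟨hjS, hjnS₁⟩ := hj
      obtain ⟨h1, h2⟩ := hstuck j hjS hjz
      constructor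
      · intro m hm
        rw [hrest, Finset.mem_sdiff]
        refine ⟨h1 hm, fun hmS₁ => hjnS₁ ?_⟩
        exact hreachS₁ m j hmS₁ ⟨j, hjS, hjz, Or.inl ⟨hm, (hjsupp j hjz).1⟩⟩ hjS
      · intro m hm
        rw [hrest, Finset.mem_sdiff]
        refine ⟨h2 hm, fun hmS₁ => hjnS₁ ?_⟩
        exact hreachS₁ m j hmS₁ ⟨j, hjS, hjz, Or.inr ⟨hm, (hjsupp j hjz).2⟩⟩ hjS
    have hcardrest := ih rest hrestss hreststuck
    have hdisj : Disjoint S₁ rest := Finset.disjoint_sdiff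
    have hunion : S₁ ∪ rest = S := Finset.union_sdiff_of_subset hS₁sub
    have hfradd := fr_union_disjoint C hdisj
    rw [hunion] at hfradd
    have hcardS : S.card = S₁.card + rest.card := by
      rw [← hunion, Finset.card_union_of_disjoint hdisj]
    have hmul : r * (fr C S₁ + fr C rest) = r * fr C S₁ + r * fr C rest := by ring
    have hmono : r * (fr C S₁ + fr C rest) ≤ r * fr C S := Nat.mul_le_mul_left r hfradd
    omega

lemma gr_insert_le (S : Finset ι) (x : ι) : gr C (insert x S) ≤ gr C S + 1 := by
  have h1 := key1 C S
  have h2 := key1 C (insert x S)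
  have h3 : fr C S ≤ fr C (insert x S) := fr_mono C (Finset.subset_insert x S)
  have h4 : (insert x S).card ≤ S.card + 1 := Finset.card_insert_le x S
  omega

/-- The key existence lemma: a set `S` with dual dimension at least `m` and
restricted rank at most `m(r-1)+1`. -/
lemma exists_good_set {r : ℕ} (hr : 2 ≤ r) (P Q : ι → ι → F) (hPQ : PairProps C r P Q)
    (i : ℕ) (hik : i * (r - 1) + 1 < Module.finrank F C) :
    ∀ m ≤ i, ∃ S : Finset ι, m ≤ fr C S ∧ gr C S ≤ m * (r - 1) + 1 := by
  obtain ⟨s, rfl⟩ : ∃ s, r = s + 2 := ⟨r - 2, by omega⟩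
  have hs : s + 2 - 1 = s + 1 := rfl
  simp only [hs] at hik ⊢
  intro m
  induction m with
  | zero =>
    intro _
    refine ⟨∅, Nat.zero_le _, ?_⟩
    have := key1 C (∅ : Finset ι)
    simp only [Finset.card_empty] at this
    omega
  | succ m ihm =>
    intro hmi
    obtain ⟨S, hfrS, hgrS⟩ := ihm (by omega)
    have hmono : (m + 1) * (s + 1) = m * (s + 1) + (s + 1) := by ring
    by_cases hfm : m + 1 ≤ fr C S
    · exact ⟨S, hfm, by omega⟩
    have hfrSm : fr C S = m := by omega
    have hkey := key1 C S
    by_cases hZS : ∃ x ∈ Zset C, x ∉ S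
    · -- add a degenerate coordinate for free
      obtain ⟨x, hxZ, hxS⟩ := hZS
      have hsuppp : supp (Pi.single x (1 : F)) = {x} := supp_single
      have hnsub : ¬ supp (Pi.single x (1 : F)) ⊆ S := by
        rw [hsuppp]
        simp [Finset.singleton_subset_iff, hxS]
      have hstep := fr_step C (single_mem_dualCode C hxZ) hnsub
      rw [hsuppp] at hstep
      refine ⟨S ∪ {x}, by omega, ?_⟩
      have hkey2 := key1 C (S ∪ {x})
      have hcard : (S ∪ {x}).card ≤ S.card + 1 := by
        have := Finset.card_union_le S {x}
        simpa using this
      omega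
    push_neg at hZS
    by_cases hatt : ∃ j ∈ S, j ∉ Zset C ∧ (¬ supp (P j) ⊆ S ∨ ¬ supp (Q j) ⊆ S)
    · -- attach a local group meeting S
      obtain ⟨j, hjS, hjz, hcase⟩ := hatt
      obtain ⟨d1, d2, _, _, c1, c2, _, _, n1, n2, _⟩ := hPQ j hjz
      have hmain : ∃ g : ι → F, g ∈ dualCode C ∧ ¬ supp g ⊆ S ∧ j ∈ supp g ∧
          (supp g).card ≤ s + 2 + 1 := by
        rcases hcase with h | h
        · exact ⟨P j, d1, h, mem_supp.2 n1, c1⟩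
        · exact ⟨Q j, d2, h, mem_supp.2 n2, c2⟩
      obtain ⟨g, hgdual, hgnsub, hgj, hgcard⟩ := hmain
      have hstep := fr_step C hgdual hgnsub
      refine ⟨S ∪ supp g, by omega, ?_⟩
      have hkey2 := key1 C (S ∪ supp g)
      have hcard : (S ∪ supp g).card ≤ S.card + (s + 2) := by
        have h1 : (S ∪ supp g).card = (supp g \ S).card + S.card := by
          rw [Finset.union_comm]
          exact (Finset.card_sdiff_add_card _ _).symm
        have h2 : supp g \ S ⊆ supp g \ {j} :=
          Finset.sdiff_subset_sdiff (le_refl _) (Finset.singleton_subset_iff.2 hjS)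
        have h3 : (supp g \ {j}).card = (supp g).card - 1 := by
          rw [Finset.card_sdiff_of_subset (Finset.singleton_subset_iff.2 hgj)]
          simp
        have h4 := Finset.card_le_card h2
        omega
      omega
    push_neg at hatt
    -- S is stuck
    have hstuck : ∀ j ∈ S, j ∉ Zset C → supp (P j) ⊆ S ∧ supp (Q j) ⊆ S := by
      intro j hj hjz
      obtain ⟨h1, h2⟩ := hatt j hj hjz
      exact ⟨h1, h2⟩
    have hSbound := stuck_card_le C hr P Q hPQ S hstuck
    rw [hfrSm] at hSbound
    have he3 : (s + 2) * m = m * (s + 1) + m := by ring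
    have hgrS' : gr C S ≤ m * (s + 1) := by omega
    -- S is not everything
    have hSne : S ≠ Finset.univ := by
      intro h
      rw [h, gr_univ] at hgrS'
      have h1 : m * (s + 1) ≤ i * (s + 1) := Nat.mul_le_mul_right _ (by omega)
      omega
    obtain ⟨x, hxS⟩ : ∃ x, x ∉ S := by
      by_contra h
      push_neg at h
      exact hSne (Finset.eq_univ_iff_forall.2 h)
    have hxZ : x ∉ Zset C := fun h => hxS (hZS x h)
    obtain ⟨d1, _, _, _, c1, _, _, _, n1, _, _⟩ := hPQ x hxZ
    have hnsub : ¬ supp (P x) ⊆ S := fun h => hxS (h (mem_supp.2 n1))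
    have hstep := fr_step C d1 hnsub
    refine ⟨S ∪ supp (P x), by omega, ?_⟩
    have hkey2 := key1 C (S ∪ supp (P x))
    have hcard : (S ∪ supp (P x)).card ≤ S.card + (s + 2 + 1) := by
      have := Finset.card_union_le S (supp (P x))
      omega
    omega

/-- grow a set until the restricted rank is exactly `m₀` -/
lemma grow_to_rank (m₀ : ℕ) (hm₀ : m₀ < gr C Finset.univ) :
    ∀ (c : ℕ) (S : Finset ι), (Finset.univ \ S).card ≤ c → gr C S ≤ m₀ →
      ∃ T : Finset ι, S ⊆ T ∧ gr C T = m₀ ∧ fr C S ≤ fr C T := by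
  intro c
  induction c with
  | zero =>
    intro S hc hgr
    have hSuniv : S = Finset.univ := by
      have h1 : (Finset.univ \ S) = ∅ := Finset.card_eq_zero.1 (by omega)
      have h2 : (Finset.univ : Finset ι) ⊆ S := by
        intro x hx
        by_contra hxS
        have : x ∈ Finset.univ \ S := Finset.mem_sdiff.2 ⟨hx, hxS⟩
        simp [h1] at this
      exact Finset.Subset.antisymm (Finset.subset_univ S) h2
    rw [hSuniv] at hgr
    omega
  | succ c ihc =>
    intro S hc hgr
    rcases eq_or_lt_of_le hgr with heq | hlt
    · exact ⟨S, Finset.Subset.refl S, heq, le_refl _⟩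
    have hSne : S ≠ Finset.univ := by
      intro h
      rw [h] at hgr
      omega
    obtain ⟨x, hxS⟩ : ∃ x, x ∉ S := by
      by_contra h
      push_neg at h
      exact hSne (Finset.eq_univ_iff_forall.2 h)
    have hgr' : gr C (insert x S) ≤ m₀ := by
      have := gr_insert_le C S x
      omega
    have hmeasure : (Finset.univ \ insert x S).card ≤ c := by
      have h1 : Finset.univ \ insert x S = (Finset.univ \ S).erase x := by
        ext y
        simp only [Finset.mem_sdiff, Finset.mem_insert, Finset.mem_erase, Finset.mem_univ,
          true_and]
        tauto
      have h2 : x ∈ Finset.univ \ S := Finset.mem_sdiff.2 ⟨Finset.mem_univ x, hxS⟩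
      rw [h1, Finset.card_erase_of_mem h2]
      omega
    obtain ⟨T, hST, hgrT, hfrT⟩ := ihc (insert x S) hmeasure hgr'
    exact ⟨T, (Finset.subset_insert x S).trans hST, hgrT,
      le_trans (fr_mono C (Finset.subset_insert x S)) hfrT⟩

lemma exists_final_set {r t : ℕ} (hr : 2 ≤ r) (ht : 2 ≤ t)
    (hav : HasAvailability C r t) (i : ℕ)
    (hik : i * (r - 1) + 1 < Module.finrank F C) :
    ∃ S : Finset ι, i * r + 1 ≤ S.card ∧ gr C S = i * (r - 1) + 1 := by
  -- choose the reduced pairs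
  have hpq : ∀ j, ∃ p q : ι → F, j ∉ Zset C →
      (p ∈ dualCode C ∧ q ∈ dualCode C ∧
       supp p ⊆ (Zset C)ᶜ ∧ supp q ⊆ (Zset C)ᶜ ∧
       (supp p).card ≤ r + 1 ∧ (supp q).card ≤ r + 1 ∧
       2 ≤ (supp p).card ∧ 2 ≤ (supp q).card ∧
       p j ≠ 0 ∧ q j ≠ 0 ∧ supp p ∩ supp q = {j}) := by
    intro j
    by_cases h : j ∈ Zset C
    · exact ⟨0, 0, fun hc => absurd h hc⟩
    · obtain ⟨p, q, h1, h2, h3, h4, h5, h6, h7, h8, h9, h10, h11⟩ :=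
        exists_pair C ht hav j h
      exact ⟨p, q, fun _ => ⟨h1, h2, h3, h4, h5, h6, h7, h8, h9, h10, h11⟩⟩
  choose P Q hPQ using hpq
  have hPQ' : PairProps C r P Q := fun j hj => hPQ j hj
  obtain ⟨S₀, hfrS₀, hgrS₀⟩ := exists_good_set C hr P Q hPQ' i hik i (le_refl i)
  have hm₀ : i * (r - 1) + 1 < gr C Finset.univ := by
    rw [gr_univ]
    exact hik
  obtain ⟨T, hST, hgrT, hfrT⟩ :=
    grow_to_rank C (i * (r - 1) + 1) hm₀ (Finset.univ \ S₀).card S₀ (le_refl _) hgrS₀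
  refine ⟨T, ?_, hgrT⟩
  have hkeyT := key1 C T
  have hfrTi : i ≤ fr C T := le_trans hfrS₀ hfrT
  have harith : i * (r - 1) + i = i * r := by
    obtain ⟨s, rfl⟩ : ∃ s, r = s + 2 := ⟨r - 2, by omega⟩
    have hs : s + 2 - 1 = s + 1 := rfl
    rw [hs]; ring
  omega

section Construction

variable {n' : ℕ} (S : Finset ι) (e : {x : ι // x ∈ Sᶜ} ↪ Fin n')

/-- relocation of the coordinates outside `S` into `Fin n'` (zero elsewhere) -/
noncomputable def psiMap : (ι → F) →ₗ[F] (Fin n' → F) where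
  toFun v := fun l => ∑ x : {x : ι // x ∈ Sᶜ}, if e x = l then v x.1 else 0
  map_add' v w := by
    funext l
    rw [Pi.add_apply, ← Finset.sum_add_distrib]
    refine Finset.sum_congr rfl (fun x _ => ?_)
    split <;> simp
  map_smul' a v := by
    funext l
    rw [RingHom.id_apply, Pi.smul_apply, smul_eq_mul, Finset.mul_sum]
    refine Finset.sum_congr rfl (fun x _ => ?_)
    split <;> simp

lemma psiMap_apply_e (v : ι → F) (x : {x : ι // x ∈ Sᶜ}) :
    psiMap S e v (e x) = v x.1 := by
  show (∑ y : {x : ι // x ∈ Sᶜ}, if e y = e x then v y.1 else 0) = v x.1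
  have : ∀ y : {x : ι // x ∈ Sᶜ}, (if e y = e x then v y.1 else 0) =
      (if y = x then v y.1 else 0) := by
    intro y
    congr 1
    simp only [eq_iff_iff]
    exact ⟨fun h => e.injective h, fun h => h ▸ rfl⟩
  rw [Finset.sum_congr rfl (fun y _ => this y)]
  simp

lemma psiMap_apply_nrange (v : ι → F) (l : Fin n') (h : ∀ x, e x ≠ l) :
    psiMap S e v l = 0 := by
  show (∑ x : {x : ι // x ∈ Sᶜ}, if e x = l then v x.1 else 0) = 0
  exact Finset.sum_eq_zero (fun x _ => by simp [h x])

lemma supp_psiMap (v : ι → F) :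
    supp (psiMap S e v) =
      (Finset.univ.filter (fun x : {x : ι // x ∈ Sᶜ} => v x.1 ≠ 0)).image (fun x => e x) := by
  ext l
  simp only [mem_supp, Finset.mem_image, Finset.mem_filter, Finset.mem_univ, true_and]
  constructor
  · intro h
    by_cases hx : ∃ x : {x : ι // x ∈ Sᶜ}, e x = l
    · obtain ⟨x, hx⟩ := hx
      rw [← hx, psiMap_apply_e] at h
      exact ⟨x, h, hx⟩
    · push_neg at hx
      exact absurd (psiMap_apply_nrange S e v l hx) h
  · rintro ⟨x, hv, rfl⟩
    rw [psiMap_apply_e]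
    exact hv

lemma wt_psiMap_le (v : ι → F) : wt (psiMap S e v) ≤ wt v := by
  rw [wt_eq_card_supp, wt_eq_card_supp, supp_psiMap]
  calc ((Finset.univ.filter (fun x : {x : ι // x ∈ Sᶜ} => v x.1 ≠ 0)).image
          (fun x => e x)).card
      ≤ (Finset.univ.filter (fun x : {x : ι // x ∈ Sᶜ} => v x.1 ≠ 0)).card :=
        Finset.card_image_le
    _ ≤ (supp v).card := by
        refine Finset.card_le_card_of_injOn (fun x => x.1) (fun x hx => ?_) ?_
        · rw [Finset.mem_coe, Finset.mem_filter] at hx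
          exact mem_supp.2 hx.2
        · intro x _ y _ h
          exact Subtype.ext h

lemma wt_psiMap_eq (v : ι → F) (hv : v ∈ ES Sᶜ) : wt (psiMap S e v) = wt v := by
  rw [wt_eq_card_supp, wt_eq_card_supp, supp_psiMap]
  rw [Finset.card_image_of_injective _ e.injective]
  refine Finset.card_bij (fun x _ => x.1) ?_ ?_ ?_
  · intro x hx
    rw [Finset.mem_filter] at hx
    exact mem_supp.2 hx.2
  · intro x _ y _ h
    exact Subtype.ext h
  · intro j hj
    have hjS : j ∈ Sᶜ := by
      by_contra h
      exact mem_supp.1 hj (hv j h)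
    exact ⟨⟨j, hjS⟩, Finset.mem_filter.2 ⟨Finset.mem_univ _, mem_supp.1 hj⟩, rfl⟩

lemma psiMap_inj (v : ι → F) (hv : v ∈ ES Sᶜ) (h : psiMap S e v = 0) : v = 0 := by
  funext j
  by_cases hjS : j ∈ Sᶜ
  · have := congrFun h (e ⟨j, hjS⟩)
    rw [psiMap_apply_e] at this
    simpa using this
  · simpa using hv j hjS

lemma dot_psiMap (u v : ι → F) (hv : v ∈ ES Sᶜ) :
    ∑ l, psiMap S e u l * psiMap S e v l = ∑ j, u j * v j := by
  classical
  have himg : ∀ l ∈ (Finset.univ.image (fun x : {x : ι // x ∈ Sᶜ} => e x))ᶜ,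
      psiMap S e u l * psiMap S e v l = 0 := by
    intro l hl
    rw [Finset.mem_compl, Finset.mem_image] at hl
    push_neg at hl
    rw [psiMap_apply_nrange S e v l (fun x => hl x (Finset.mem_univ x))]
    ring
  rw [← Finset.sum_subset (Finset.subset_univ
      (Finset.univ.image (fun x : {x : ι // x ∈ Sᶜ} => e x)))
      (fun l _ hl => himg l (Finset.mem_compl.2 hl))]
  rw [Finset.sum_image (fun x _ y _ h => e.injective h)]
  have h1 : ∀ x : {x : ι // x ∈ Sᶜ},
      psiMap S e u (e x) * psiMap S e v (e x) = u x.1 * v x.1 := by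
    intro x
    rw [psiMap_apply_e, psiMap_apply_e]
  rw [Finset.sum_congr rfl (fun x _ => h1 x)]
  rw [← Finset.sum_subset (Finset.subset_univ Sᶜ) (fun j _ hj => by
    rw [hv j hj]; ring)]
  exact (Finset.sum_subtype Sᶜ (fun j => Iff.rfl) (fun j => u j * v j)).symm

end Construction

lemma dmin_le {C : Submodule F (ι → F)} {c : ι → F} (hc : c ∈ C) (h0 : c ≠ 0) :
    dmin C ≤ wt c :=
  Nat.sInf_le ⟨c, hc, h0, rfl⟩

lemma exists_wt_dmin {C : Submodule F (ι → F)} (h : ∃ c, c ∈ C ∧ c ≠ 0) :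
    ∃ c ∈ C, c ≠ 0 ∧ wt c = dmin C := by
  obtain ⟨c₀, hc₀, h0⟩ := h
  have hne : {w | ∃ c ∈ C, c ≠ 0 ∧ wt c = w}.Nonempty := ⟨wt c₀, c₀, hc₀, h0, rfl⟩
  exact Nat.sInf_mem hne

lemma exists_ne_zero_of_finrank_pos {C : Submodule F (ι → F)}
    (h : 0 < Module.finrank F C) : ∃ c, c ∈ C ∧ c ≠ 0 := by
  by_contra hc
  push_neg at hc
  have : C = ⊥ := eq_bot_iff.2 (fun c hcC => by
    rw [Submodule.mem_bot]
    exact hc c hcC)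
  rw [this, finrank_bot] at h
  omega

lemma shortened_code {n' r t : ℕ} (S : Finset ι) (e : {x : ι // x ∈ Sᶜ} ↪ Fin n')
    (hav : HasAvailability C r t) :
    ∃ C' : Submodule F (Fin n' → F),
      Module.finrank F C' = Module.finrank F (CS C S) ∧
      HasAvailability C' r t ∧
      (∀ c' ∈ C', c' ≠ 0 → ∃ c ∈ C, c ≠ 0 ∧ wt c = wt c') := by
  classical
  refine ⟨(CS C S).map (psiMap S e), ?_, ?_, ?_⟩
  · -- dimension is preserved
    set φ : (CS C S) →ₗ[F] (Fin n' → F) := (psiMap S e).comp (CS C S).subtype with hφ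
    have hinj : Function.Injective φ := by
      rw [← LinearMap.ker_eq_bot, eq_bot_iff]
      intro c hc
      rw [LinearMap.mem_ker, hφ, LinearMap.comp_apply, Submodule.subtype_apply] at hc
      have hcES : (c : ι → F) ∈ ES Sᶜ := (Submodule.mem_inf.1 c.2).2
      have := psiMap_inj S e c.1 hcES hc
      simp only [Submodule.mem_bot]
      exact Subtype.ext this
    have hrange : LinearMap.range φ = (CS C S).map (psiMap S e) := by
      rw [hφ, LinearMap.range_comp, Submodule.range_subtype]
    rw [← hrange]
    exact LinearMap.finrank_range_of_inj hinj
  · -- availability is preserved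
    intro l
    by_cases hl : ∃ x : {x : ι // x ∈ Sᶜ}, e x = l
    · obtain ⟨x, rfl⟩ := hl
      obtain ⟨h, hdual, hwt, hnz, hint⟩ := hav x.1
      refine ⟨fun a => psiMap S e (h a), ?_, ?_, ?_, ?_⟩
      · intro a
        rw [mem_dualCode]
        intro c' hc'
        obtain ⟨c, hcCS, rfl⟩ := Submodule.mem_map.1 hc'
        have hcES : c ∈ ES Sᶜ := (Submodule.mem_inf.1 hcCS).2
        have hcC : c ∈ C := (Submodule.mem_inf.1 hcCS).1
        show (∑ m, psiMap S e c m * psiMap S e (h a) m) = 0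
        have h1 : (∑ m, psiMap S e c m * psiMap S e (h a) m)
            = ∑ m, psiMap S e (h a) m * psiMap S e c m :=
          Finset.sum_congr rfl (fun m _ => mul_comm _ _)
        rw [h1, dot_psiMap S e (h a) c hcES]
        have h2 : (∑ j, h a j * c j) = ∑ j, c j * h a j :=
          Finset.sum_congr rfl (fun m _ => mul_comm _ _)
        rw [h2]
        exact mem_dualCode.1 (hdual a) c hcC
      · intro a
        calc wt (psiMap S e (h a)) ≤ wt (h a) := wt_psiMap_le S e (h a)
          _ ≤ r + 1 := hwt a
      · intro a
        show psiMap S e (h a) (e x) ≠ 0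
        rw [psiMap_apply_e]
        exact hnz a
      · intro a b hab
        ext m
        simp only [Set.mem_inter_iff, Set.mem_setOf_eq, Set.mem_singleton_iff]
        constructor
        · rintro ⟨ha, hb⟩
          by_cases hm : ∃ y : {x : ι // x ∈ Sᶜ}, e y = m
          · obtain ⟨y, rfl⟩ := hm
            have ha' : psiMap S e (h a) (e y) ≠ 0 := ha
            have hb' : psiMap S e (h b) (e y) ≠ 0 := hb
            rw [psiMap_apply_e] at ha' hb'
            have hy : y.1 ∈ ({l | h a l ≠ 0} ∩ {l | h b l ≠ 0} : Set ι) := ⟨ha', hb'⟩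
            rw [hint a b hab] at hy
            have : y = x := Subtype.ext hy
            rw [this]
          · push_neg at hm
            have := psiMap_apply_nrange S e (h a) m hm
            exact absurd this ha
        · rintro rfl
          constructor
          · show psiMap S e (h a) (e x) ≠ 0
            rw [psiMap_apply_e]
            exact hnz a
          · show psiMap S e (h b) (e x) ≠ 0
            rw [psiMap_apply_e]
            exact hnz b
    · push_neg at hl
      set sing : Fin n' → F := Pi.single l 1 with hsing
      refine ⟨fun _ => sing, ?_, ?_, ?_, ?_⟩
      · intro a
        rw [mem_dualCode]
        intro c' hc'
        obtain ⟨c, hcCS, rfl⟩ := Submodule.mem_map.1 hc'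
        show (∑ m, psiMap S e c m * sing m) = 0
        have h1 := dotB_single (psiMap S e c) l
        rw [dotB_apply] at h1
        rw [hsing, h1]
        exact psiMap_apply_nrange S e c l hl
      · intro a
        show wt sing ≤ r + 1
        rw [hsing, wt_eq_card_supp, supp_single]
        simp
      · intro a
        show sing l ≠ 0
        rw [hsing]
        simp
      · intro a b hab
        have hset : {m : Fin n' | sing m ≠ 0} = {l} := by
          rw [hsing]
          ext m
          simp only [Set.mem_setOf_eq, Set.mem_singleton_iff, Pi.single_apply]
          rcases eq_or_ne m l with rfl | hm
          · simp
          · simp [hm]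
        show ({m : Fin n' | sing m ≠ 0} ∩ {m : Fin n' | sing m ≠ 0} : Set (Fin n')) = {l}
        rw [hset, Set.inter_self]
  · -- nonzero codewords lift with the same weight
    intro c' hc' h0
    obtain ⟨c, hcCS, rfl⟩ := Submodule.mem_map.1 hc'
    have hcES : c ∈ ES Sᶜ := (Submodule.mem_inf.1 hcCS).2
    have hcC : c ∈ C := (Submodule.mem_inf.1 hcCS).1
    refine ⟨c, hcC, ?_, (wt_psiMap_eq S e c hcES).symm⟩
    intro h
    rw [h] at h0
    exact h0 (map_zero _)

theorem main {F : Type} [Field F] [Fintype F] [DecidableEq F]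
    (n r t i : ℕ) (hr : 2 ≤ r) (ht : 2 ≤ t) (hi : 1 ≤ i)
    (C : Submodule F (Fin n → F))
    (hav : HasAvailability C r t)
    (hik : i * (r - 1) + 1 < Module.finrank F C) :
    dmin C ≤ dmax F (n - (i * r + 1)) (Module.finrank F C - (i * (r - 1) + 1)) r t := by
  classical
  obtain ⟨S, hScard, hgrS⟩ := exists_final_set C hr ht hav i hik
  have hkey2 := key2 C S
  have hcardle : S.card ≤ n := by
    have := Finset.card_le_card (Finset.subset_univ S)
    simpa using this
  have hfinCS : Module.finrank F (CS C S) = Module.finrank F C - (i * (r - 1) + 1) := by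
    omega
  have hfinCSpos : 1 ≤ Module.finrank F (CS C S) := by omega
  -- build the embedding of the complement into `Fin (n - (i*r+1))`
  have hcompl : Fintype.card {x : Fin n // x ∈ Sᶜ} ≤ Fintype.card (Fin (n - (i * r + 1))) := by
    rw [Fintype.card_coe, Fintype.card_fin, Finset.card_compl]
    simp only [Fintype.card_fin]
    omega
  obtain ⟨e⟩ := Function.Embedding.nonempty_of_card_le hcompl
  obtain ⟨C', hfinC', hav', hlift⟩ := shortened_code C S e hav
  rw [hfinCS] at hfinC'
  -- the minimum distance did not decrease
  have hC'pos : 0 < Module.finrank F C' := by omega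
  obtain ⟨c', hc'm, hc'0, hc'wt⟩ := exists_wt_dmin (exists_ne_zero_of_finrank_pos hC'pos)
  obtain ⟨c, hcm, hc0, hcwt⟩ := hlift c' hc'm hc'0
  have hdle : dmin C ≤ dmin C' := by
    calc dmin C ≤ wt c := dmin_le hcm hc0
      _ = wt c' := hcwt
      _ = dmin C' := hc'wt
  -- conclude via the supremum
  have hmem : dmin C' ∈ {d | ∃ C'' : Submodule F (Fin (n - (i * r + 1)) → F),
      Module.finrank F C'' = Module.finrank F C - (i * (r - 1) + 1) ∧
      HasAvailability C'' r t ∧ dmin C'' = d} := ⟨C', hfinC', hav', rfl⟩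
  have hbdd : BddAbove {d | ∃ C'' : Submodule F (Fin (n - (i * r + 1)) → F),
      Module.finrank F C'' = Module.finrank F C - (i * (r - 1) + 1) ∧
      HasAvailability C'' r t ∧ dmin C'' = d} := by
    refine ⟨n - (i * r + 1), ?_⟩
    rintro d ⟨C'', hfin'', _, rfl⟩
    have hpos'' : 0 < Module.finrank F C'' := by omega
    obtain ⟨c'', hc''m, hc''0⟩ := exists_ne_zero_of_finrank_pos hpos''
    calc dmin C'' ≤ wt c'' := dmin_le hc''m hc''0
      _ ≤ n - (i * r + 1) := by
        rw [wt_eq_card_supp]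
        have := Finset.card_le_card (Finset.subset_univ (supp c''))
        simpa using this
  exact le_trans hdle (le_csSup hbdd hmem)

end Stmt16

/-- If `C` is an `[n,k]` code over `F_q` with locality `r ≥ 2` and availability `t ≥ 2`,
then for every positive integer `i` with `i(r-1)+1 < k`,
`d_min(C) ≤ d_max(n - ir - 1, k - (i(r-1)+1), r, t)`. -/
theorem stmt16 {F : Type} [Field F] [Fintype F] [DecidableEq F]
    (n r t i : ℕ) (hr : 2 ≤ r) (ht : 2 ≤ t) (hi : 1 ≤ i)
    (C : Submodule F (Fin n → F))
    (hav : HasAvailability C r t)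
    (hik : i * (r - 1) + 1 < Module.finrank F C) :
    dmin C ≤ dmax F (n - (i * r + 1)) (Module.finrank F C - (i * (r - 1) + 1)) r t :=
  Stmt16.main n r t i hr ht hi C hav hik
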